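/- arXiv:2012.03311 — 3 statements merged into one kernel-verified Lean document; each statement's English description precedes it below -/
import Mathlib

section
/- Let I be an ideal on ℕ. An infinite real matrix A = (a_{n,k}) is (Fin,I)-regular if and only if: (R1) sup_n ∑_k |a_{n,k}| < ∞; (R2) for every k, the sequence (a_{n,k})_n is I-convergent to 0; and (R3) the sequence (∑_k a_{n,k})_n is I-convergent to 1. -/
open Filter Topology

/-- Characteristic function identifying a subset of ℕ with a point of Cantor space. -/
noncomputable def chi (S : Set ℕ) : ℕ → Bool := fun n => @decide (n ∈ S) (Classical.dec _)

/-- `I` is an ideal on ℕ: hereditary, closed under finite unions, contains all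
finite sets, and does not contain ℕ. -/
structure IsIdeal (I : Set (Set ℕ)) : Prop where
  mem_of_subset : ∀ ⦃S T : Set ℕ⦄, S ⊆ T → T ∈ I → S ∈ I
  union_mem : ∀ ⦃S T : Set ℕ⦄, S ∈ I → T ∈ I → S ∪ T ∈ I
  finite_mem : ∀ ⦃S : Set ℕ⦄, S.Finite → S ∈ I
  univ_not_mem : Set.univ ∉ I

/-- The dual filter of an ideal. -/
def dualFilter (I : Set (Set ℕ)) : Set (Set ℕ) := {S | Sᶜ ∈ I}

/-- A real sequence is bounded. -/
def Bdd (y : ℕ → ℝ) : Prop := ∃ M : ℝ, ∀ n, |y n| ≤ M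

/-- The series ∑ₖ f k converges (its partial sums converge). -/
def SeriesConv (f : ℕ → ℝ) : Prop :=
  ∃ l : ℝ, Tendsto (fun N => ∑ k ∈ Finset.range N, f k) atTop (𝓝 l)

/-- The value of the series ∑ₖ f k (the limit of partial sums, when it exists). -/
noncomputable def seriesSum (f : ℕ → ℝ) : ℝ :=
  limUnder atTop (fun N => ∑ k ∈ Finset.range N, f k)

/-- All rows of `A` applied to `y` give convergent series: `Ay` is well defined. -/
def RowsConv (A : ℕ → ℕ → ℝ) (y : ℕ → ℝ) : Prop := ∀ n, SeriesConv (fun k => A n k * y k)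

/-- The sequence `Ay = (∑ₖ a_{n,k} y_k)ₙ`. -/
noncomputable def matMul (A : ℕ → ℕ → ℝ) (y : ℕ → ℝ) : ℕ → ℝ :=
  fun n => seriesSum (fun k => A n k * y k)

/-- `y` is `I`-convergent to `η`. -/
def IConvTo (I : Set (Set ℕ)) (y : ℕ → ℝ) (η : ℝ) : Prop :=
  ∀ ε : ℝ, 0 < ε → {n | ε < |y n - η|} ∈ I

/-- `y` is `I`-convergent. -/
def IConv (I : Set (Set ℕ)) (y : ℕ → ℝ) : Prop := ∃ η : ℝ, IConvTo I y η

/-- `A` is a regular matrix: it maps convergent sequences to convergent sequences,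
preserving limits. -/
def RegularMatrix (A : ℕ → ℕ → ℝ) : Prop :=
  ∀ (y : ℕ → ℝ) (l : ℝ), Tendsto y atTop (𝓝 l) →
    RowsConv A y ∧ Tendsto (matMul A y) atTop (𝓝 l)

/-- `A` is `(Fin, I)`-regular: it maps bounded convergent sequences to bounded
`I`-convergent sequences, preserving the limit. -/
def FinIRegular (I : Set (Set ℕ)) (A : ℕ → ℕ → ℝ) : Prop :=
  ∀ y : ℕ → ℝ, Bdd y → ∀ l : ℝ, Tendsto y atTop (𝓝 l) →
    RowsConv A y ∧ Bdd (matMul A y) ∧ IConvTo I (matMul A y) l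

/-- `S ⊆ ℕ` has asymptotic density zero. -/
noncomputable def DensityZero (S : Set ℕ) : Prop :=
  Tendsto (fun n : ℕ =>
      (((Finset.range (n + 1)).filter (fun m => @decide (m ∈ S) (Classical.dec _) = true)).card : ℝ) / n)
    atTop (𝓝 0)

/-- `y` is statistically convergent. -/
noncomputable def StatConv (y : ℕ → ℝ) : Prop :=
  ∃ η : ℝ, ∀ ε : ℝ, 0 < ε → DensityZero {n | ε < |y n - η|}

/-- The ideal Fin × Fin, represented as an ideal on ℕ via the 2-adic valuation. -/
def FinTimesFin : Set (Set ℕ) :=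
  {S | ∀ᶠ k in atTop, {n ∈ S | padicValNat 2 n = k}.Finite}

/-- `I` contains an isomorphic copy of `J`. -/
def ContainsIsoCopy (I J : Set (Set ℕ)) : Prop :=
  ∃ ι : ℕ → ℕ, Function.Injective ι ∧ ∀ S : Set ℕ, S ∈ J ↔ ι ⁻¹' S ∈ I

/-- A family of subsets of ℕ is Borel (as a subset of the Cantor space `ℕ → Bool`). -/
def BorelFamily (𝒜 : Set (Set ℕ)) : Prop := @MeasurableSet (ℕ → Bool) (borel (ℕ → Bool)) (chi '' 𝒜)

/-- A family of subsets of ℕ is meager (as a subset of the Cantor space `ℕ → Bool`). -/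
def MeagerFamily (𝒜 : Set (Set ℕ)) : Prop := IsMeagre (chi '' 𝒜)

/-- An F_σ subset of the Cantor space. -/
def IsFSigma (K : Set (ℕ → Bool)) : Prop :=
  ∃ F : ℕ → Set (ℕ → Bool), (∀ n, IsClosed (F n)) ∧ K = ⋃ n, F n

/-- A family of subsets of ℕ is F_{σδ} (as a subset of the Cantor space). -/
def FSigmaDeltaFamily (𝒜 : Set (Set ℕ)) : Prop :=
  ∃ F : ℕ → ℕ → Set (ℕ → Bool), (∀ i j, IsClosed (F i j)) ∧ chi '' 𝒜 = ⋂ i, ⋃ j, F i j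

/-- The space Σ of strictly increasing functions ℕ → ℕ, as a subspace of ℕ^ℕ. -/
abbrev MonoSeq : Type := {σ : ℕ → ℕ // StrictMono σ}

/-- The set Σ_{x,A}(I) of those σ ∈ Σ for which A σ(x) is well defined and I-convergent. -/
noncomputable def SigmaSet (x : ℕ → ℝ) (A : ℕ → ℕ → ℝ) (I : Set (Set ℕ)) : Set MonoSeq :=
  {σ | RowsConv A (fun k => x (σ.1 k)) ∧ IConv I (matMul A (fun k => x (σ.1 k)))}

/-- `I*` is ω-diagonalizable by `I*`-universal sets. -/
def OmegaDiagonalizable (I : Set (Set ℕ)) : Prop :=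
  ∃ F : ℕ → ℕ → Set ℕ,
    (∀ n k, (F n k).Finite ∧ (F n k).Nonempty) ∧
    (∀ n, ∀ A ∈ dualFilter I, ∃ k, F n k ⊆ A) ∧
    (∀ A ∈ dualFilter I, ∃ n m, ∀ k, m < k → (F n k ∩ A).Nonempty)

/-- `y` is `I`-bounded. -/
def IBounded (I : Set (Set ℕ)) (y : ℕ → ℝ) : Prop := ∃ m : ℕ, {n | (m : ℝ) ≤ |y n|} ∈ I

/-- The metric d(σ₁,σ₂) = ∑_{i ∈ Im σ₁ Δ Im σ₂} 2^{-i} on Σ. -/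
noncomputable def dSigma (σ₁ σ₂ : MonoSeq) : ℝ :=
  ∑' i : ℕ, Set.indicator (symmDiff (Set.range σ₁.1) (Set.range σ₂.1)) (fun i => (2 : ℝ)⁻¹ ^ i) i


section ST_aux

lemma ST_seriesSum_eq {f : ℕ → ℝ} {l : ℝ}
    (h : Tendsto (fun N => ∑ k ∈ Finset.range N, f k) atTop (𝓝 l)) : seriesSum f = l :=
  h.limUnder_eq

lemma ST_matMul_eq_tsum {A : ℕ → ℕ → ℝ} {y : ℕ → ℝ} (n : ℕ)
    (h : Summable fun k => A n k * y k) : matMul A y n = ∑' k, A n k * y k :=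
  ST_seriesSum_eq h.hasSum.tendsto_sum_nat

lemma ST_bdd_of_tendsto {s : ℕ → ℝ} {l : ℝ} (h : Tendsto s atTop (𝓝 l)) :
    ∃ C, ∀ N, |s N| ≤ C := by
  obtain ⟨R, -, hRd⟩ := cauchySeq_bdd h.cauchySeq
  refine ⟨|s 0| + R, fun N => ?_⟩
  have := hRd N 0
  rw [Real.dist_eq] at this
  calc |s N| = |s N - s 0 + s 0| := by ring_nf
    _ ≤ |s N - s 0| + |s 0| := abs_add_le _ _
    _ ≤ |s 0| + R := by linarith

noncomputable def ST_mkC0 (f : ℕ → ℝ) (hf : Tendsto f atTop (𝓝 0)) :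
    ZeroAtInftyContinuousMap ℕ ℝ :=
  ⟨⟨f, continuous_of_discreteTopology⟩, by
    rw [cocompact_eq_cofinite, Nat.cofinite_eq_atTop]; exact hf⟩

lemma ST_mkC0_apply (f : ℕ → ℝ) (hf : Tendsto f atTop (𝓝 0)) (k : ℕ) :
    (ST_mkC0 f hf) k = f k := rfl

lemma ST_c0_abs_le_norm (y : ZeroAtInftyContinuousMap ℕ ℝ) (k : ℕ) : |y k| ≤ ‖y‖ := by
  calc |y k| = ‖y.toBCF k‖ := rfl
    _ ≤ ‖y.toBCF‖ := y.toBCF.norm_coe_le_norm k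
    _ = ‖y‖ := ZeroAtInftyContinuousMap.norm_toBCF_eq_norm

lemma ST_c0_norm_le (y : ZeroAtInftyContinuousMap ℕ ℝ) {M : ℝ} (hM : 0 ≤ M)
    (h : ∀ k, |y k| ≤ M) : ‖y‖ ≤ M := by
  rw [← ZeroAtInftyContinuousMap.norm_toBCF_eq_norm]
  exact (BoundedContinuousFunction.norm_le hM).2 h

lemma ST_c0_tendsto (y : ZeroAtInftyContinuousMap ℕ ℝ) : Tendsto ⇑y atTop (𝓝 0) := by
  have := y.zero_at_infty'
  rwa [cocompact_eq_cofinite, Nat.cofinite_eq_atTop] at this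

/-- Sign vector. -/
noncomputable def ST_sgnv (A : ℕ → ℕ → ℝ) (n N : ℕ) : ℕ → ℝ :=
  fun k => if k < N then (if A n k < 0 then -1 else 1) else 0

lemma ST_sgnv_tendsto (A : ℕ → ℕ → ℝ) (n N : ℕ) :
    Tendsto (ST_sgnv A n N) atTop (𝓝 0) := by
  apply tendsto_const_nhds.congr'
  filter_upwards [eventually_ge_atTop N] with k hk
  simp [ST_sgnv, Nat.not_lt.2 hk]

lemma ST_sgnv_abs_le (A : ℕ → ℕ → ℝ) (n N k : ℕ) : |ST_sgnv A n N k| ≤ 1 := by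
  unfold ST_sgnv
  split_ifs <;> simp

lemma ST_sgnv_mul (A : ℕ → ℕ → ℝ) (n N k : ℕ) (hk : k < N) :
    A n k * ST_sgnv A n N k = |A n k| := by
  unfold ST_sgnv
  rw [if_pos hk]
  rcases lt_or_ge (A n k) 0 with h | h
  · rw [if_pos h, abs_of_neg h]; ring
  · rw [if_neg (not_lt.2 h), abs_of_nonneg h]; ring

lemma ST_sgnv_mul_zero (A : ℕ → ℕ → ℝ) (n N k : ℕ) (hk : ¬ k < N) :
    A n k * ST_sgnv A n N k = 0 := by
  simp [ST_sgnv, hk]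

lemma ST_summable_mul {A : ℕ → ℕ → ℝ} {n : ℕ} (h : Summable fun k => |A n k|)
    {y : ℕ → ℝ} {M : ℝ} (hy : ∀ k, |y k| ≤ M) : Summable fun k => A n k * y k := by
  apply Summable.of_abs
  apply Summable.of_nonneg_of_le (fun k => abs_nonneg _) (fun k => ?_) (h.mul_right M)
  rw [abs_mul]
  exact mul_le_mul_of_nonneg_left (hy k) (abs_nonneg _)

/-- Partial-sum functional as a continuous linear map on c₀. -/
noncomputable def ST_partialCLM (A : ℕ → ℕ → ℝ) (n N : ℕ) :
    ZeroAtInftyContinuousMap ℕ ℝ →L[ℝ] ℝ :=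
  LinearMap.mkContinuous
    { toFun := fun y => ∑ k ∈ Finset.range N, A n k * y k
      map_add' := fun y z => by
        simp only [ZeroAtInftyContinuousMap.coe_add, Pi.add_apply, mul_add,
          Finset.sum_add_distrib]
      map_smul' := fun c y => by
        simp only [ZeroAtInftyContinuousMap.coe_smul, Pi.smul_apply, smul_eq_mul,
          RingHom.id_apply, Finset.mul_sum]
        exact Finset.sum_congr rfl (fun k _ => by ring) }
    (∑ k ∈ Finset.range N, |A n k|)
    (fun y => by
      simp only [LinearMap.coe_mk, AddHom.coe_mk, Real.norm_eq_abs]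
      calc |∑ k ∈ Finset.range N, A n k * y k|
          ≤ ∑ k ∈ Finset.range N, |A n k * y k| := Finset.abs_sum_le_sum_abs _ _
        _ ≤ ∑ k ∈ Finset.range N, |A n k| * ‖y‖ := by
            apply Finset.sum_le_sum
            intro k _
            rw [abs_mul]
            exact mul_le_mul_of_nonneg_left (ST_c0_abs_le_norm y k) (abs_nonneg _)
        _ = (∑ k ∈ Finset.range N, |A n k|) * ‖y‖ := by rw [Finset.sum_mul])

lemma ST_partialCLM_apply (A : ℕ → ℕ → ℝ) (n N : ℕ) (y : ZeroAtInftyContinuousMap ℕ ℝ) :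
    ST_partialCLM A n N y = ∑ k ∈ Finset.range N, A n k * y k := rfl

/-- Row functional as a continuous linear map on c₀. -/
noncomputable def ST_rowCLM (A : ℕ → ℕ → ℝ) (n : ℕ) (h : Summable fun k => |A n k|) :
    ZeroAtInftyContinuousMap ℕ ℝ →L[ℝ] ℝ :=
  LinearMap.mkContinuous
    { toFun := fun y => ∑' k, A n k * y k
      map_add' := fun y z => by
        have hy : Summable fun k => A n k * y k :=
          ST_summable_mul h (fun k => ST_c0_abs_le_norm y k)
        have hz : Summable fun k => A n k * z k :=
          ST_summable_mul h (fun k => ST_c0_abs_le_norm z k)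
        simp only [ZeroAtInftyContinuousMap.coe_add, Pi.add_apply, mul_add]
        exact Summable.tsum_add hy hz
      map_smul' := fun c y => by
        simp only [ZeroAtInftyContinuousMap.coe_smul, Pi.smul_apply, smul_eq_mul,
          RingHom.id_apply]
        rw [← tsum_mul_left]
        exact tsum_congr fun k => by ring }
    (∑' k, |A n k|)
    (fun y => by
      simp only [LinearMap.coe_mk, AddHom.coe_mk, Real.norm_eq_abs]
      have hs : Summable fun k => |A n k * y k| := by
        apply Summable.of_nonneg_of_le (fun k => abs_nonneg _) (fun k => ?_) (h.mul_right ‖y‖)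
        rw [abs_mul]
        exact mul_le_mul_of_nonneg_left (ST_c0_abs_le_norm y k) (abs_nonneg _)
      calc |∑' k, A n k * y k| ≤ ∑' k, |A n k * y k| := by
            simpa only [Real.norm_eq_abs] using
              norm_tsum_le_tsum_norm (f := fun k => A n k * y k)
                (by simpa only [Real.norm_eq_abs] using hs)
        _ ≤ ∑' k, |A n k| * ‖y‖ := by
            apply Summable.tsum_le_tsum _ hs (h.mul_right ‖y‖)
            intro k
            rw [abs_mul]
            exact mul_le_mul_of_nonneg_left (ST_c0_abs_le_norm y k) (abs_nonneg _)
        _ = (∑' k, |A n k|) * ‖y‖ := tsum_mul_right)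

lemma ST_rowCLM_apply (A : ℕ → ℕ → ℝ) (n : ℕ) (h : Summable fun k => |A n k|)
    (y : ZeroAtInftyContinuousMap ℕ ℝ) : ST_rowCLM A n h y = ∑' k, A n k * y k := rfl

end ST_aux


lemma ST_ideal_biUnion {I : Set (Set ℕ)} (hI : IsIdeal I) (s : Finset ℕ) (f : ℕ → Set ℕ)
    (h : ∀ k ∈ s, f k ∈ I) : (⋃ k ∈ s, f k) ∈ I := by
  classical
  induction s using Finset.induction_on with
  | empty => simpa using hI.finite_mem Set.finite_empty
  | @insert a s' ha ih =>
      rw [Finset.set_biUnion_insert]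
      exact hI.union_mem (h a (Finset.mem_insert_self a s'))
        (ih fun k hks => h k (Finset.mem_insert_of_mem hks))

/-- Silverman–Toeplitz type characterization: `A` is (Fin,I)-regular iff
(R1) sup_n ∑_k |a_{n,k}| < ∞, (R2) each column is I-convergent to 0, and
(R3) each row sum converges and the sequence of row sums is I-convergent to 1. -/
theorem stmt_5 (I : Set (Set ℕ)) (hI : IsIdeal I) (A : ℕ → ℕ → ℝ) :
    FinIRegular I A ↔
      ((∃ C : ℝ, ∀ n N : ℕ, ∑ k ∈ Finset.range N, |A n k| ≤ C) ∧
       (∀ k : ℕ, IConvTo I (fun n => A n k) 0) ∧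
       (RowsConv A (fun _ => 1) ∧ IConvTo I (matMul A (fun _ => 1)) 1)) := by
  constructor
  · intro hA
    -- each row is absolutely summable
    have habs : ∀ n, Summable fun k => |A n k| := by
      intro n
      have hpt : ∀ y : ZeroAtInftyContinuousMap ℕ ℝ, ∃ C, ∀ N, ‖ST_partialCLM A n N y‖ ≤ C := by
        intro y
        have hyb : Bdd ⇑y := ⟨‖y‖, fun k => ST_c0_abs_le_norm y k⟩
        obtain ⟨hconv, -, -⟩ := hA (⇑y) hyb 0 (ST_c0_tendsto y)
        obtain ⟨l, hl⟩ := hconv n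
        obtain ⟨C, hC⟩ := ST_bdd_of_tendsto hl
        exact ⟨C, fun N => hC N⟩
      obtain ⟨C', hC'⟩ := banach_steinhaus hpt
      have hC'0 : 0 ≤ C' := le_trans (norm_nonneg _) (hC' 0)
      apply summable_of_sum_range_le (fun k => abs_nonneg _)
      intro N
      set s := ST_mkC0 (ST_sgnv A n N) (ST_sgnv_tendsto A n N) with hs
      have hns : ‖s‖ ≤ 1 := ST_c0_norm_le s zero_le_one (fun k => ST_sgnv_abs_le A n N k)
      have heval : ST_partialCLM A n N s = ∑ k ∈ Finset.range N, |A n k| := by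
        rw [ST_partialCLM_apply]
        exact Finset.sum_congr rfl fun k hk =>
          ST_sgnv_mul A n N k (Finset.mem_range.1 hk)
      calc ∑ k ∈ Finset.range N, |A n k| = ST_partialCLM A n N s := heval.symm
        _ ≤ |ST_partialCLM A n N s| := le_abs_self _
        _ ≤ ‖ST_partialCLM A n N‖ * ‖s‖ := (ST_partialCLM A n N).le_opNorm s
        _ ≤ C' * 1 := mul_le_mul (hC' N) hns (norm_nonneg _) hC'0
        _ = C' := mul_one C'
    -- (R1) via Banach–Steinhaus on the row functionals
    have hR1 : ∃ C : ℝ, ∀ n N : ℕ, ∑ k ∈ Finset.range N, |A n k| ≤ C := by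
      have hpt : ∀ y : ZeroAtInftyContinuousMap ℕ ℝ,
          ∃ C, ∀ n, ‖ST_rowCLM A n (habs n) y‖ ≤ C := by
        intro y
        have hyb : Bdd ⇑y := ⟨‖y‖, fun k => ST_c0_abs_le_norm y k⟩
        obtain ⟨-, ⟨M, hM⟩, -⟩ := hA (⇑y) hyb 0 (ST_c0_tendsto y)
        refine ⟨M, fun n => ?_⟩
        have hsum : Summable fun k => A n k * y k :=
          ST_summable_mul (habs n) (fun k => ST_c0_abs_le_norm y k)
        have : ST_rowCLM A n (habs n) y = matMul A (⇑y) n := by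
          rw [ST_rowCLM_apply, ST_matMul_eq_tsum n hsum]
        rw [Real.norm_eq_abs, this]
        exact hM n
      obtain ⟨C, hC⟩ := banach_steinhaus hpt
      have hC0 : 0 ≤ C := le_trans (norm_nonneg _) (hC 0)
      refine ⟨C, fun n N => ?_⟩
      set s := ST_mkC0 (ST_sgnv A n N) (ST_sgnv_tendsto A n N) with hs
      have hns : ‖s‖ ≤ 1 := ST_c0_norm_le s zero_le_one (fun k => ST_sgnv_abs_le A n N k)
      have heval : ST_rowCLM A n (habs n) s = ∑ k ∈ Finset.range N, |A n k| := by
        rw [ST_rowCLM_apply]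
        show (∑' k, A n k * ST_sgnv A n N k) = ∑ k ∈ Finset.range N, |A n k|
        rw [tsum_eq_sum (s := Finset.range N)
          (fun k hk => ST_sgnv_mul_zero A n N k (fun h => hk (Finset.mem_range.2 h)))]
        exact Finset.sum_congr rfl fun k hk =>
          ST_sgnv_mul A n N k (Finset.mem_range.1 hk)
      calc ∑ k ∈ Finset.range N, |A n k| = ST_rowCLM A n (habs n) s := heval.symm
        _ ≤ |ST_rowCLM A n (habs n) s| := le_abs_self _
        _ ≤ ‖ST_rowCLM A n (habs n)‖ * ‖s‖ := (ST_rowCLM A n (habs n)).le_opNorm s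
        _ ≤ C * 1 := mul_le_mul (hC n) hns (norm_nonneg _) hC0
        _ = C := mul_one C
    refine ⟨hR1, ?_, ?_⟩
    · -- (R2)
      intro k
      have heb : Bdd (fun j => if j = k then (1:ℝ) else 0) := ⟨1, fun j => by
        by_cases h : j = k <;> simp [h]⟩
      have he0 : Tendsto (fun j => if j = k then (1:ℝ) else 0) atTop (𝓝 0) := by
        apply tendsto_const_nhds.congr'
        filter_upwards [eventually_ge_atTop (k+1)] with j hj
        have hjk : j ≠ k := by omega
        simp [hjk]
      obtain ⟨-, -, hIc⟩ := hA _ heb 0 he0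
      have hme : matMul A (fun j => if j = k then (1:ℝ) else 0) = fun n => A n k := by
        funext n
        apply ST_seriesSum_eq
        apply tendsto_const_nhds.congr'
        filter_upwards [eventually_ge_atTop (k+1)] with N hN
        have hkN : k ∈ Finset.range N := Finset.mem_range.2 (by omega)
        symm
        calc ∑ j ∈ Finset.range N, A n j * (if j = k then (1:ℝ) else 0)
            = ∑ j ∈ Finset.range N, if j = k then A n j else 0 := by
              refine Finset.sum_congr rfl fun j _ => ?_
              by_cases h : j = k <;> simp [h]
          _ = A n k := by
              rw [Finset.sum_ite_eq' (Finset.range N) k (fun j => A n j), if_pos hkN]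
      rwa [hme] at hIc
    · -- (R3)
      obtain ⟨h1, -, h3⟩ := hA (fun _ => 1) ⟨1, fun n => by simp⟩ 1 tendsto_const_nhds
      exact ⟨h1, h3⟩
  · rintro ⟨⟨C, hC⟩, hR2, -, hR3⟩ y ⟨M, hM⟩ l hy
    have hC0 : 0 ≤ C := le_trans (le_of_eq (Finset.sum_range_zero _).symm) (hC 0 0)
    have hM0 : 0 ≤ M := (abs_nonneg _).trans (hM 0)
    have habs : ∀ n, Summable fun k => |A n k| := fun n =>
      summable_of_sum_range_le (fun k => abs_nonneg _) (hC n)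
    have htsC : ∀ n, (∑' k, |A n k|) ≤ C := fun n => Summable.tsum_le_of_sum_range_le (habs n) (hC n)
    have hsum : ∀ n, Summable fun k => A n k * y k := fun n => ST_summable_mul (habs n) hM
    have hrow1 : ∀ n, Summable fun k => A n k * (1:ℝ) := fun n => by
      simpa using (habs n).of_abs
    have hRn : ∀ n, matMul A (fun _ => 1) n = ∑' k, A n k := by
      intro n
      rw [ST_matMul_eq_tsum n (hrow1 n)]
      simp
    refine ⟨fun n => ⟨∑' k, A n k * y k, (hsum n).hasSum.tendsto_sum_nat⟩, ⟨C * M, ?_⟩, ?_⟩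
    · intro n
      rw [ST_matMul_eq_tsum n (hsum n)]
      have hsabs : Summable fun k => |A n k * y k| := by
        apply Summable.of_nonneg_of_le (fun k => abs_nonneg _) (fun k => ?_)
          ((habs n).mul_right M)
        rw [abs_mul]
        exact mul_le_mul_of_nonneg_left (hM k) (abs_nonneg _)
      calc |∑' k, A n k * y k| ≤ ∑' k, |A n k * y k| := by
            simpa only [Real.norm_eq_abs] using
              norm_tsum_le_tsum_norm (f := fun k => A n k * y k)
                (by simpa only [Real.norm_eq_abs] using hsabs)
        _ ≤ ∑' k, |A n k| * M := by
            apply Summable.tsum_le_tsum _ hsabs ((habs n).mul_right M)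
            intro k
            rw [abs_mul]
            exact mul_le_mul_of_nonneg_left (hM k) (abs_nonneg _)
        _ = (∑' k, |A n k|) * M := tsum_mul_right
        _ ≤ C * M := mul_le_mul_of_nonneg_right (htsC n) hM0
    · intro ε hε
      have hCp : (0:ℝ) < C + 1 := by linarith
      have hlp : (0:ℝ) < |l| + 1 := by positivity
      set δ : ℝ := ε / (3 * (C + 1)) with hδdef
      have hδ : 0 < δ := by positivity
      obtain ⟨K, hK⟩ := (Metric.tendsto_atTop.1 hy) δ hδ
      set θ : ℝ := ε / (3 * (K + 1) * (M + |l| + 1)) with hθdef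
      have hθ : 0 < θ := by positivity
      set E1 : Set ℕ := ⋃ k ∈ Finset.range K, {n | θ < |A n k - 0|} with hE1def
      have hE1 : E1 ∈ I := ST_ideal_biUnion hI _ _ (fun k _ => hR2 k θ hθ)
      set ε2 : ℝ := ε / (3 * (|l| + 1)) with hε2def
      have hε2 : 0 < ε2 := by positivity
      set E2 : Set ℕ := {n | ε2 < |matMul A (fun _ => 1) n - 1|} with hE2def
      have hE2 : E2 ∈ I := hR3 ε2 hε2
      apply hI.mem_of_subset _ (hI.union_mem hE1 hE2)
      intro n hn
      by_contra hnc
      obtain ⟨hn1, hn2⟩ := not_or.1 hnc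
      -- bounds from non-membership
      have hb1 : ∀ k < K, |A n k| ≤ θ := by
        intro k hk
        by_contra hgt
        push_neg at hgt
        exact hn1 (Set.mem_biUnion (Finset.mem_range.2 hk) (by simpa using hgt))
      have hb2 : |(∑' k, A n k) - 1| ≤ ε2 := by
        have := hn2
        rw [hE2def] at this
        simp only [Set.mem_setOf_eq, not_lt] at this
        rwa [hRn n] at this
      -- decomposition
      have hyl : ∀ k, |y k - l| ≤ M + |l| := fun k =>
        (abs_sub _ _).trans (add_le_add (hM k) le_rfl)
      have hsumsub : Summable fun k => A n k * (y k - l) := ST_summable_mul (habs n) hyl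
      have hdec1 : (∑ k ∈ Finset.range K, A n k * (y k - l))
          + (∑' i, A n (i + K) * (y (i + K) - l)) = ∑' k, A n k * (y k - l) :=
        hsumsub.sum_add_tsum_nat_add K
      have hdec2 : (∑' k, A n k * (y k - l)) = (∑' k, A n k * y k) - l * (∑' k, A n k) := by
        calc (∑' k, A n k * (y k - l)) = ∑' k, (A n k * y k - l * A n k) :=
              tsum_congr fun k => by ring
          _ = (∑' k, A n k * y k) - ∑' k, l * A n k :=
              Summable.tsum_sub (hsum n) (((habs n).of_abs).mul_left l)
          _ = (∑' k, A n k * y k) - l * (∑' k, A n k) := by rw [tsum_mul_left]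
      have hkey : matMul A y n - l = (∑ k ∈ Finset.range K, A n k * (y k - l))
          + (∑' i, A n (i + K) * (y (i + K) - l)) + l * ((∑' k, A n k) - 1) := by
        rw [ST_matMul_eq_tsum n (hsum n)]
        have : l * ((∑' k, A n k) - 1) = l * (∑' k, A n k) - l := by ring
        rw [this, hdec1, hdec2]
        ring
      -- bound the three pieces
      have hB1 : |∑ k ∈ Finset.range K, A n k * (y k - l)| ≤ ε / 3 := by
        have hθeq : (K + 1 : ℝ) * ((M + |l| + 1) * θ) = ε / 3 := by
          rw [hθdef]; field_simp
        calc |∑ k ∈ Finset.range K, A n k * (y k - l)|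
            ≤ ∑ k ∈ Finset.range K, |A n k * (y k - l)| := Finset.abs_sum_le_sum_abs _ _
          _ ≤ ∑ k ∈ Finset.range K, θ * (M + |l|) := by
              apply Finset.sum_le_sum
              intro k hk
              rw [abs_mul]
              exact mul_le_mul (hb1 k (Finset.mem_range.1 hk)) (hyl k) (abs_nonneg _) hθ.le
          _ = (K : ℝ) * (θ * (M + |l|)) := by
              rw [Finset.sum_const, Finset.card_range, nsmul_eq_mul]
          _ ≤ ε / 3 := by nlinarith [hθ.le, abs_nonneg l, hM0,
              (show (K:ℝ) ≤ (K:ℝ) + 1 by linarith)]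
      have htail_abs : Summable fun i => |A n (i + K)| :=
        (summable_nat_add_iff (f := fun j => |A n j|) K).2 (habs n)
      have htail_sum : Summable fun i => A n (i + K) * (y (i + K) - l) :=
        (summable_nat_add_iff (f := fun j => A n j * (y j - l)) K).2 hsumsub
      have hB2 : |∑' i, A n (i + K) * (y (i + K) - l)| ≤ ε / 3 := by
        have htail_le : (∑' i, |A n (i + K)|) ≤ C := by
          have h0 : 0 ≤ ∑ k ∈ Finset.range K, |A n k| :=
            Finset.sum_nonneg fun k _ => abs_nonneg _
          have := (habs n).sum_add_tsum_nat_add K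
          linarith [htsC n]
        have hsabs : Summable fun i => |A n (i + K) * (y (i + K) - l)| := by
          apply Summable.of_nonneg_of_le (fun i => abs_nonneg _) (fun i => ?_)
            (htail_abs.mul_right δ)
          rw [abs_mul]
          exact mul_le_mul_of_nonneg_left (le_of_lt (by
            rw [← Real.dist_eq]; exact hK (i + K) (Nat.le_add_left K i))) (abs_nonneg _)
        have hCδ : C * δ ≤ ε / 3 := by
          have : (C + 1) * δ = ε / 3 := by rw [hδdef]; field_simp
          nlinarith [hδ.le]
        calc |∑' i, A n (i + K) * (y (i + K) - l)|
            ≤ ∑' i, |A n (i + K) * (y (i + K) - l)| := by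
              simpa only [Real.norm_eq_abs] using
                norm_tsum_le_tsum_norm (f := fun i => A n (i + K) * (y (i + K) - l))
                  (by simpa only [Real.norm_eq_abs] using hsabs)
          _ ≤ ∑' i, |A n (i + K)| * δ := by
              apply Summable.tsum_le_tsum _ hsabs (htail_abs.mul_right δ)
              intro i
              rw [abs_mul]
              exact mul_le_mul_of_nonneg_left (le_of_lt (by
                rw [← Real.dist_eq]; exact hK (i + K) (Nat.le_add_left K i))) (abs_nonneg _)
          _ = (∑' i, |A n (i + K)|) * δ := tsum_mul_right
          _ ≤ C * δ := mul_le_mul_of_nonneg_right htail_le hδ.le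
          _ ≤ ε / 3 := hCδ
      have hB3 : |l * ((∑' k, A n k) - 1)| ≤ ε / 3 := by
        rw [abs_mul]
        have : |l| * ε2 ≤ ε / 3 := by
          have : (|l| + 1) * ε2 = ε / 3 := by rw [hε2def]; field_simp
          nlinarith [hε2.le, abs_nonneg l]
        calc |l| * |(∑' k, A n k) - 1| ≤ |l| * ε2 :=
              mul_le_mul_of_nonneg_left hb2 (abs_nonneg _)
          _ ≤ ε / 3 := this
      have : |matMul A y n - l| ≤ ε := by
        rw [hkey]
        calc |_ + _ + _| ≤ |(∑ k ∈ Finset.range K, A n k * (y k - l))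
              + (∑' i, A n (i + K) * (y (i + K) - l))| + |l * ((∑' k, A n k) - 1)| :=
              abs_add_le _ _
          _ ≤ |∑ k ∈ Finset.range K, A n k * (y k - l)|
              + |∑' i, A n (i + K) * (y (i + K) - l)| + |l * ((∑' k, A n k) - 1)| := by
              linarith [abs_add_le (∑ k ∈ Finset.range K, A n k * (y k - l))
                (∑' i, A n (i + K) * (y (i + K) - l))]
          _ ≤ ε / 3 + ε / 3 + ε / 3 := by linarith
          _ = ε := by ring
      exact absurd hn (not_lt.2 this)
end

section
/- Fix a bounded divergent real sequence x, an ideal I on ℕ such that the dual filter I* is ω-diagonalizable by I*-universal sets, and a (Fin,I)-regular infinite real matrix A. Then the set Σ_{x,A}(I) = {σ ∈ Σ : Aσ(x) is well defined and I-convergent} is meager in Σ. -/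
open Filter Topology

section Helpers

lemma summable_abs_row (c : ℕ → ℝ)
    (h : ∀ y : ℕ → ℝ, Bdd y → Tendsto y atTop (𝓝 0) → SeriesConv fun k => c k * y k) :
    Summable fun k => |c k| := by
  by_contra hs
  have hdiv : Tendsto (fun n => ∑ k ∈ Finset.range n, |c k|) atTop atTop :=
    (not_summable_iff_tendsto_nat_atTop_of_nonneg fun n => abs_nonneg _).1 hs
  have hblock : ∀ a : ℕ, ∃ b, a < b ∧ (1:ℝ) ≤ ∑ k ∈ Finset.Ico a b, |c k| := by
    intro a
    obtain ⟨b0, hb0⟩ := (tendsto_atTop.1 hdiv (∑ k ∈ Finset.range a, |c k| + 1)).exists_forall_of_atTop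
    refine ⟨max (a+1) b0, lt_of_lt_of_le (Nat.lt_succ_self a) (le_max_left _ _), ?_⟩
    rw [Finset.sum_Ico_eq_sub _ (le_trans (Nat.le_succ a) (le_max_left _ _))]
    have := hb0 (max (a+1) b0) (le_max_right _ _)
    linarith
  choose nxt hnxt1 hnxt2 using hblock
  set N : ℕ → ℕ := fun j => Nat.rec 0 (fun _ p => nxt p) j with hN
  have hNsucc : ∀ j, N (j+1) = nxt (N j) := fun j => rfl
  have hNmono : StrictMono N := strictMono_nat_of_lt_succ fun j => hnxt1 (N j)
  classical
  set B : ℕ → ℕ := fun l => Nat.findGreatest (fun i => N i ≤ l) l with hB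
  have hNB : ∀ l, N (B l) ≤ l := fun l =>
    Nat.findGreatest_spec (P := fun i => N i ≤ l) (Nat.zero_le l) (by show N 0 ≤ l; simp [hN])
  have hBge : ∀ J l, N J ≤ l → J ≤ B l := fun J l hJ =>
    Nat.le_findGreatest ((hNmono.le_apply).trans hJ) hJ
  have hBeq : ∀ j l, N j ≤ l → l < N (j+1) → B l = j := by
    intro j l h1 h2
    refine le_antisymm ?_ (hBge j l h1)
    by_contra hgt
    push_neg at hgt
    exact absurd ((hNmono.monotone hgt).trans (hNB l)) (not_le.2 h2)
  set y : ℕ → ℝ := fun l => (if c l < 0 then (-1:ℝ) else 1) / ((B l : ℝ) + 1) with hy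
  have hden : ∀ l, (0:ℝ) < (B l : ℝ) + 1 := fun l => by positivity
  have hcy : ∀ l, c l * y l = |c l| / ((B l : ℝ) + 1) := by
    intro l
    by_cases hc : c l < 0
    · simp only [hy, hc, if_pos]
      rw [abs_of_neg hc]; ring
    · simp only [hy, hc, if_neg, not_false_iff]
      rw [abs_of_nonneg (not_lt.1 hc)]; ring
  have hynorm : ∀ l, ‖y l‖ = 1 / ((B l : ℝ) + 1) := by
    intro l
    rw [Real.norm_eq_abs, hy]
    rw [abs_div, abs_of_pos (hden l)]
    congr 1
    by_cases hc : c l < 0 <;> simp [hc]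
  have hybdd : Bdd y := by
    refine ⟨1, fun l => ?_⟩
    rw [← Real.norm_eq_abs, hynorm l]
    rw [div_le_one (hden l)]
    have : (0:ℝ) ≤ (B l : ℝ) := Nat.cast_nonneg _
    linarith
  have hBtop : Tendsto B atTop atTop := by
    refine tendsto_atTop_atTop.2 fun J => ⟨N J, fun l hl => hBge J l hl⟩
  have hy0 : Tendsto y atTop (𝓝 0) := by
    refine squeeze_zero_norm (fun l => le_of_eq (hynorm l)) ?_
    exact tendsto_one_div_add_atTop_nhds_zero_nat.comp hBtop
  obtain ⟨l, hl⟩ := h y hybdd hy0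
  have key : ∀ J, (∑ j ∈ Finset.range J, (1:ℝ)/((j:ℝ)+1)) ≤
      ∑ k ∈ Finset.range (N J), c k * y k := by
    intro J
    induction J with
    | zero => simp [hN]
    | succ J ih =>
      rw [Finset.sum_range_succ]
      have hsplit : ∑ k ∈ Finset.range (N (J+1)), c k * y k =
          (∑ k ∈ Finset.range (N J), c k * y k) +
          ∑ k ∈ Finset.Ico (N J) (N (J+1)), c k * y k := by
        rw [Finset.range_eq_Ico, Finset.range_eq_Ico]
        exact (Finset.sum_Ico_consecutive (fun k => c k * y k) (Nat.zero_le _)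
          (le_of_lt (hNmono (Nat.lt_succ_self J)))).symm
      rw [hsplit]
      have hblk : (1:ℝ)/((J:ℝ)+1) ≤ ∑ k ∈ Finset.Ico (N J) (N (J+1)), c k * y k := by
        have heq : ∀ k ∈ Finset.Ico (N J) (N (J+1)), c k * y k = |c k| / ((J:ℝ)+1) := by
          intro k hk
          rw [Finset.mem_Ico] at hk
          rw [hcy k, hBeq J k hk.1 hk.2]
        rw [Finset.sum_congr rfl heq, ← Finset.sum_div]
        have h1 : (1:ℝ) ≤ ∑ k ∈ Finset.Ico (N J) (N (J+1)), |c k| := by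
          have := hnxt2 (N J); rwa [← hNsucc J] at this
        gcongr
      linarith
  have hTN : Tendsto (fun J => ∑ k ∈ Finset.range (N J), c k * y k) atTop (𝓝 l) :=
    hl.comp hNmono.tendsto_atTop
  have hTtop : Tendsto (fun J => ∑ k ∈ Finset.range (N J), c k * y k) atTop atTop := by
    refine tendsto_atTop_mono key ?_
    simpa using Real.tendsto_sum_range_one_div_nat_succ_atTop
  exact not_tendsto_nhds_of_tendsto_atTop hTtop l hTN

def Cyl (g : MonoSeq) (L : ℕ) : Set MonoSeq := {σ | ∀ i < L, σ.1 i = g.1 i}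

lemma isOpen_cyl (g : MonoSeq) (L : ℕ) : IsOpen (Cyl g L) := by
  have : Cyl g L = Subtype.val ⁻¹' (⋂ i ∈ Finset.range L, (fun f : ℕ → ℕ => f i) ⁻¹' {g.1 i}) := by
    ext σ
    simp [Cyl, Set.mem_iInter, Finset.mem_range]
  rw [this]
  refine (isOpen_biInter_finset fun i _ => ?_).preimage continuous_subtype_val
  exact (continuous_apply i).isOpen_preimage _ (isOpen_discrete _)

lemma mem_cyl_self (g : MonoSeq) (L : ℕ) : g ∈ Cyl g L := fun _ _ => rfl

lemma exists_cyl_subset {g : MonoSeq} {U : Set MonoSeq} (hU : U ∈ 𝓝 g) :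
    ∃ L, Cyl g L ⊆ U := by
  rw [show 𝓝 g = comap Subtype.val (𝓝 g.1) from nhds_induced _ _, Filter.mem_comap] at hU
  obtain ⟨W, hW, hWU⟩ := hU
  rw [nhds_pi, Filter.mem_pi] at hW
  obtain ⟨Idx, hIfin, t, ht, hsub⟩ := hW
  obtain ⟨Lb, hLb⟩ := hIfin.bddAbove
  refine ⟨Lb + 1, fun σ hσ => ?_⟩
  apply hWU
  apply hsub
  intro i hi
  have hiL : i < Lb + 1 := Nat.lt_succ_of_le (hLb hi)
  have := ht i
  rw [nhds_discrete, Filter.mem_pure] at this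
  simpa [hσ i hiL] using this

end Helpers

/-- For bounded divergent `x`, an ideal `I` whose dual filter is
ω-diagonalizable by I*-universal sets, and a (Fin,I)-regular matrix `A`,
the set Σ_{x,A}(I) is meager in Σ. -/
theorem stmt_10 (x : ℕ → ℝ) (hxb : Bdd x) (hx : ¬ ∃ l : ℝ, Tendsto x atTop (𝓝 l))
    (I : Set (Set ℕ)) (hI : IsIdeal I) (hdiag : OmegaDiagonalizable I)
    (A : ℕ → ℕ → ℝ) (hA : FinIRegular I A) :
    IsMeagre (SigmaSet x A I) := by
  classical
  obtain ⟨F, hFprops, hFuniv, hFdiag⟩ := hdiag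
  obtain ⟨M0, hM0⟩ := hxb
  set M : ℝ := max M0 1 with hMdef
  have hM : ∀ n, |x n| ≤ M := fun n => (hM0 n).trans (le_max_left _ _)
  have hMpos : (0:ℝ) < M := lt_of_lt_of_le one_pos (le_max_right _ _)
  have hball : ∀ n, x n ∈ Metric.closedBall (0:ℝ) M := fun n => by
    simpa [Real.dist_eq] using hM n
  obtain ⟨a, -, φa, hφa, hxa⟩ :=
    tendsto_subseq_of_bounded (Metric.isBounded_closedBall (x := (0:ℝ)) (r := M)) hball
  have hnot : ¬ Tendsto x atTop (𝓝 a) := fun h => hx ⟨a, h⟩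
  rw [Metric.tendsto_atTop] at hnot
  push_neg at hnot
  obtain ⟨ε, hεpos, hfreq⟩ := hnot
  obtain ⟨ψ, hψ, hψa⟩ := extraction_of_frequently_atTop (frequently_atTop.2 hfreq)
  obtain ⟨b, -, φb, hφb, hxb'⟩ :=
    tendsto_subseq_of_bounded (Metric.isBounded_closedBall (x := (0:ℝ)) (r := M))
      (x := x ∘ ψ) (fun n => hball (ψ n))
  have hba : ε ≤ dist b a := by
    have hdt : Tendsto (fun n => dist ((x ∘ ψ ∘ φb) n) a) atTop (𝓝 (dist b a)) :=
      hxb'.dist (tendsto_const_nhds (x := a))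
    exact ge_of_tendsto' hdt fun n => hψa (φb n)
  set d : ℝ := dist b a with hddef
  have hd : 0 < d := lt_of_lt_of_le hεpos hba
  set ε' : ℝ := d / 16 with hε'def
  have hε' : 0 < ε' := by positivity
  have hpick : ∀ r : ℝ, ∃ c : ℝ, ∃ φc : ℕ → ℕ,
      StrictMono φc ∧ Tendsto (x ∘ φc) atTop (𝓝 c) ∧ d/2 ≤ |r - c| := by
    intro r
    rcases le_or_gt (d/2) (dist r a) with h | h
    · exact ⟨a, φa, hφa, hxa, by rwa [Real.dist_eq] at h⟩
    · refine ⟨b, ψ ∘ φb, hψ.comp hφb, hxb', ?_⟩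
      have h1 : d ≤ dist b r + dist r a := dist_triangle b r a
      have h2 : dist r b = dist b r := dist_comm r b
      rw [← Real.dist_eq, h2]
      linarith
  have hrowsum : ∀ j, Summable fun k => |A j k| := by
    intro j
    apply summable_abs_row
    intro y hb h0
    exact (hA y hb 0 h0).1 j
  set E : ℚ × ℕ × ℕ → Set MonoSeq := fun p =>
    {σ | RowsConv A (fun k => x (σ.1 k)) ∧
      ∀ k, p.2.2 < k → ∃ j ∈ F p.2.1 k,
        |matMul A (fun l => x (σ.1 l)) j - (p.1 : ℝ)| ≤ 2 * ε'} with hEdef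
  -- the cover
  have hcover : SigmaSet x A I ⊆ ⋃ p : ℚ × ℕ × ℕ, E p := by
    rintro σ ⟨hrows, η, hη⟩
    obtain ⟨q, hq1, hq2⟩ := exists_rat_btwn (show η - ε' < η + ε' by linarith)
    have hdual : {j | ε' < |matMul A (fun l => x (σ.1 l)) j - η|}ᶜ ∈ dualFilter I := by
      show _ ∈ dualFilter I
      rw [dualFilter, Set.mem_setOf_eq, compl_compl]
      exact hη ε' hε'
    obtain ⟨n, m, hnm⟩ := hFdiag _ hdual
    refine Set.mem_iUnion.2 ⟨(q, n, m), hrows, fun k hk => ?_⟩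
    obtain ⟨j, hj1, hj2⟩ := hnm k hk
    refine ⟨j, hj1, ?_⟩
    have h3 : |matMul A (fun l => x (σ.1 l)) j - η| ≤ ε' := not_lt.1 hj2
    have h4 : |matMul A (fun l => x (σ.1 l)) j - (q:ℝ)| ≤
        |matMul A (fun l => x (σ.1 l)) j - η| + |η - (q:ℝ)| := abs_sub_le _ η _
    have h5 : |η - (q:ℝ)| ≤ ε' := by
      rw [abs_le]; constructor <;> linarith
    linarith
  -- nowhere density
  have hND : ∀ p, IsNowhereDense (E p) := by
    rintro ⟨q, n, m⟩
    show interior (closure (E (q, n, m))) = ∅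
    rw [Set.eq_empty_iff_forall_notMem]
    intro g hg
    rw [mem_interior_iff_mem_nhds] at hg
    obtain ⟨L0, hL0⟩ := exists_cyl_subset hg
    obtain ⟨c, φc, hφc, hxc, hqc⟩ := hpick (q : ℝ)
    set s0 : ℕ → ℕ := fun i => if i < L0 then g.1 i else φc (i + g.1 L0) with hs0
    have hs0mono : StrictMono s0 := by
      intro i j hij
      simp only [hs0]
      by_cases hj : j < L0
      · rw [if_pos (hij.trans hj), if_pos hj]; exact g.2 hij
      · rw [if_neg hj]
        by_cases hi : i < L0
        · rw [if_pos hi]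
          have h1 : g.1 i < g.1 L0 := g.2 hi
          have h2 : g.1 L0 ≤ φc (j + g.1 L0) := le_trans (Nat.le_add_left _ _) hφc.le_apply
          exact lt_of_lt_of_le h1 h2
        · rw [if_neg hi]
          exact hφc (by omega)
    set σ0 : MonoSeq := ⟨s0, hs0mono⟩ with hσ0def
    have hσ0cyl : σ0 ∈ Cyl g L0 := by
      intro i hi
      show s0 i = g.1 i
      simp [hs0, if_pos hi]
    set y0 : ℕ → ℝ := fun k => x (s0 k) with hy0def
    have hy0lim : Tendsto y0 atTop (𝓝 c) := by
      have h1 : Tendsto (fun i => x (φc (i + g.1 L0))) atTop (𝓝 c) :=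
        hxc.comp (tendsto_add_atTop_nat _)
      refine h1.congr' ?_
      filter_upwards [eventually_ge_atTop L0] with i hi
      simp [hy0def, hs0, not_lt.2 hi]
    obtain ⟨hrows0, hbdd0, hIconv0⟩ := hA y0 ⟨M, fun k => hM _⟩ c hy0lim
    set G : Set ℕ := {j | ε' < |matMul A y0 j - c|}ᶜ with hGdef
    have hGmem : G ∈ dualFilter I := by
      show Gᶜ ∈ I
      rw [hGdef, compl_compl]
      exact hIconv0 ε' hε'
    set Bu : Set ℕ := ⋃ k' ∈ Set.Iic m, F n k' with hBu
    have hBufin : Bu.Finite := Set.Finite.biUnion (Set.finite_Iic m) fun k' _ => (hFprops n k').1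
    have hG' : (G \ Bu) ∈ dualFilter I := by
      show (G \ Bu)ᶜ ∈ I
      rw [Set.diff_eq, Set.compl_inter, compl_compl, compl_compl]
      exact hI.union_mem (hIconv0 ε' hε') (hI.finite_mem hBufin)
    obtain ⟨k, hk⟩ := hFuniv n _ hG'
    have hkm : m < k := by
      by_contra hle
      push_neg at hle
      obtain ⟨j, hj⟩ := (hFprops n k).2
      have hjB : j ∈ Bu := Set.mem_biUnion (Set.mem_Iic.2 hle) hj
      exact (hk hj).2 hjB
    -- tails of the rows
    have hδpos : (0:ℝ) < ε' / (2*M) := by positivity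
    have htail : ∀ j : ℕ, ∃ L, ∀ n', L ≤ n' →
        ∑ l ∈ Finset.Ico L n', |A j l| ≤ ε' / (2*M) := by
      intro j
      have hc : CauchySeq (fun n' => ∑ l ∈ Finset.range n', |A j l|) :=
        (hrowsum j).hasSum.tendsto_sum_nat.cauchySeq
      obtain ⟨L, hL⟩ := Metric.cauchySeq_iff'.1 hc (ε'/(2*M)) hδpos
      refine ⟨L, fun n' hn' => ?_⟩
      have h1 := hL n' hn'
      rw [Real.dist_eq] at h1
      rw [Finset.sum_Ico_eq_sub _ hn']
      exact le_of_lt (lt_of_le_of_lt (le_abs_self _) h1)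
    choose Lrow hLrow using htail
    set Fk : Finset ℕ := (hFprops n k).1.toFinset with hFk
    set L' : ℕ := max L0 (Fk.sup Lrow) with hL'
    have hσ0cl : σ0 ∈ closure (E (q, n, m)) := hL0 hσ0cyl
    obtain ⟨σ, hσV, hσE⟩ :=
      (_root_.mem_closure_iff.1 hσ0cl _ (isOpen_cyl σ0 L') (mem_cyl_self σ0 L'))
    obtain ⟨hrowsσ, hEσ⟩ := hσE
    obtain ⟨j, hjF, hjq⟩ := hEσ k hkm
    have hjG : j ∈ G := (hk hjF).1
    have hj0 : |matMul A y0 j - c| ≤ ε' := not_lt.1 hjG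
    have hLrowj : Lrow j ≤ L' :=
      le_trans (Finset.le_sup ((hFprops n k).1.mem_toFinset.2 hjF)) (le_max_right _ _)
    obtain ⟨lσ, hlσ⟩ := hrowsσ j
    obtain ⟨l0, hl0⟩ := hrows0 j
    have hmσ : matMul A (fun l => x (σ.1 l)) j = lσ := hlσ.limUnder_eq
    have hm0 : matMul A y0 j = l0 := hl0.limUnder_eq
    have hdiff : |lσ - l0| ≤ ε' := by
      have hev : ∀ᶠ n' in atTop,
          |(∑ l ∈ Finset.range n', A j l * x (σ.1 l)) -
            ∑ l ∈ Finset.range n', A j l * y0 l| ≤ ε' := by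
        filter_upwards [eventually_ge_atTop L'] with n' hn'
        have heq : (∑ l ∈ Finset.range n', A j l * x (σ.1 l)) -
            ∑ l ∈ Finset.range n', A j l * y0 l
            = ∑ l ∈ Finset.Ico L' n', (A j l * x (σ.1 l) - A j l * y0 l) := by
          rw [← Finset.sum_sub_distrib]
          refine (Finset.sum_subset ?_ ?_).symm
          · intro l hl
            rw [Finset.mem_Ico] at hl
            exact Finset.mem_range.2 hl.2
          · intro l hl hnl
            rw [Finset.mem_range] at hl
            rw [Finset.mem_Ico, not_and_or, not_le, not_lt] at hnl
            have hlL : l < L' := by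
              rcases hnl with h | h
              · exact h
              · omega
            have : σ.1 l = s0 l := hσV l hlL
            rw [hy0def, this]
            ring
        rw [heq]
        calc |∑ l ∈ Finset.Ico L' n', (A j l * x (σ.1 l) - A j l * y0 l)|
            ≤ ∑ l ∈ Finset.Ico L' n', |A j l * x (σ.1 l) - A j l * y0 l| :=
              Finset.abs_sum_le_sum_abs _ _
          _ ≤ ∑ l ∈ Finset.Ico L' n', |A j l| * (2*M) := by
              refine Finset.sum_le_sum fun l _ => ?_
              rw [← mul_sub, abs_mul]
              refine mul_le_mul_of_nonneg_left ?_ (abs_nonneg _)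
              calc |x (σ.1 l) - y0 l| ≤ |x (σ.1 l)| + |y0 l| := abs_sub _ _
                _ ≤ M + M := add_le_add (hM _) (hM _)
                _ = 2*M := by ring
          _ = (∑ l ∈ Finset.Ico L' n', |A j l|) * (2*M) := by rw [Finset.sum_mul]
          _ ≤ (∑ l ∈ Finset.Ico (Lrow j) n', |A j l|) * (2*M) := by
              refine mul_le_mul_of_nonneg_right ?_ (by positivity)
              refine Finset.sum_le_sum_of_subset_of_nonneg ?_ (fun _ _ _ => abs_nonneg _)
              exact Finset.Ico_subset_Ico_left hLrowj
          _ ≤ (ε'/(2*M)) * (2*M) :=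
              mul_le_mul_of_nonneg_right (hLrow j n' (le_trans hLrowj hn')) (by positivity)
          _ = ε' := by field_simp
      have hevt : Tendsto (fun n' => |(∑ l ∈ Finset.range n', A j l * x (σ.1 l)) -
          ∑ l ∈ Finset.range n', A j l * y0 l|) atTop (𝓝 |lσ - l0|) := (hlσ.sub hl0).abs
      exact le_of_tendsto hevt hev
    rw [hmσ] at hjq
    rw [hm0] at hj0
    have ht1 : |(q:ℝ) - c| ≤ |(q:ℝ) - lσ| + |lσ - c| := abs_sub_le _ lσ _
    have ht2 : |lσ - c| ≤ |lσ - l0| + |l0 - c| := abs_sub_le _ l0 _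
    have ht3 : |(q:ℝ) - lσ| = |lσ - (q:ℝ)| := abs_sub_comm _ _
    have : d/2 ≤ 4 * ε' := by
      rw [ht3] at ht1
      linarith
    rw [hε'def] at this
    linarith
  -- assemble
  have hmea : ∀ p, IsMeagre (E p) := fun p =>
    isMeagre_iff_countable_union_isNowhereDense.2
      ⟨{E p}, by simpa using hND p, Set.countable_singleton _, by simp⟩
  have henc : IsMeagre (⋃ i : ℕ, E ((Denumerable.eqv (ℚ × ℕ × ℕ)).symm i)) :=
    isMeagre_iUnion fun i => hmea _
  refine henc.mono (hcover.trans ?_)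
  intro σ hσ
  rw [Set.mem_iUnion] at hσ ⊢
  obtain ⟨p, hp⟩ := hσ
  refine ⟨Denumerable.eqv (ℚ × ℕ × ℕ) p, ?_⟩
  simpa using hp
end

section
/- Let I be a Borel ideal on ℕ, x a bounded real sequence, and A a (Fin,I)-regular infinite real matrix. Then the set Σ_{x,A}(I) = {σ ∈ Σ : Aσ(x) is well defined and I-convergent} is a Borel subset of Σ, and the map T : Σ_{x,A}(I) → ℝ sending σ to the I-limit of Aσ(x) is Borel measurable. -/
open Filter Topology

/- ### Auxiliary lemmas ### -/

-- chi injective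
lemma chi_mem_iff (S : Set ℕ) (n : ℕ) : chi S n = true ↔ n ∈ S := by
  simp [chi]

lemma chi_injective : Function.Injective chi := by
  intro S T h
  ext n
  rw [← chi_mem_iff S n, ← chi_mem_iff T n, h]

lemma IsIdeal.compl_not_mem {I : Set (Set ℕ)} (hI : IsIdeal I) {S : Set ℕ} (h : S ∈ I) :
    Sᶜ ∉ I := fun h' => hI.univ_not_mem (by
  have := hI.union_mem h h'
  rwa [Set.union_compl_self] at this)

lemma lt_subset_le (q : ℝ) (y : ℕ → ℝ) : {n : ℕ | q < y n} ⊆ {n | q ≤ y n} :=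
  by intro n hn; simp only [Set.mem_setOf_eq] at hn ⊢; exact le_of_lt hn

lemma iconvto_ge_mem {I : Set (Set ℕ)} (hI : IsIdeal I) {y : ℕ → ℝ} {η : ℝ}
    (h : IConvTo I y η) {q : ℝ} (hq : η < q) : {n | q ≤ y n} ∈ I := by
  refine hI.mem_of_subset ?_ (h ((q - η)/2) (by linarith))
  intro n hn
  have : (q - η)/2 < y n - η := by simp only [Set.mem_setOf_eq] at hn ⊢; linarith
  simp only [Set.mem_setOf_eq]
  calc (q - η)/2 < y n - η := this
  _ ≤ |y n - η| := le_abs_self _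

lemma iconvto_le_mem {I : Set (Set ℕ)} (hI : IsIdeal I) {y : ℕ → ℝ} {η : ℝ}
    (h : IConvTo I y η) {p : ℝ} (hp : p < η) : {n | y n ≤ p} ∈ I := by
  refine hI.mem_of_subset ?_ (h ((η - p)/2) (by linarith))
  intro n hn
  simp only [Set.mem_setOf_eq] at hn ⊢
  have : (η - p)/2 < η - y n := by linarith
  calc (η - p)/2 < η - y n := this
  _ ≤ |y n - η| := by rw [abs_sub_comm]; exact le_abs_self _

lemma iconvto_lt_not_mem {I : Set (Set ℕ)} (hI : IsIdeal I) {y : ℕ → ℝ} {η : ℝ}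
    (h : IConvTo I y η) {q : ℝ} (hq : q < η) : {n | q < y n} ∉ I := by
  have h1 : {n | y n ≤ q} ∈ I := iconvto_le_mem hI h hq
  have h2 : {n : ℕ | y n ≤ q}ᶜ = {n | q < y n} := by ext n; simp [not_le]
  rw [← h2]
  exact hI.compl_not_mem h1

/-- characterization of I-convergence by countably many ideal-membership conditions -/
lemma iconv_char {I : Set (Set ℕ)} (hI : IsIdeal I) (y : ℕ → ℝ) :
    IConv I y ↔ ((∃ q : ℚ, {n | (q:ℝ) < y n} ∈ I) ∧ (∃ p : ℚ, {n | y n ≤ (p:ℝ)} ∈ I) ∧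
      ∀ p q : ℚ, p < q → ({n | y n ≤ (p:ℝ)} ∈ I ∨ {n | (q:ℝ) ≤ y n} ∈ I)) := by
  constructor
  · rintro ⟨η, h⟩
    refine ⟨?_, ?_, ?_⟩
    · obtain ⟨q, hq⟩ := exists_rat_gt η
      exact ⟨q, hI.mem_of_subset (lt_subset_le _ _) (iconvto_ge_mem hI h hq)⟩
    · obtain ⟨p, hp⟩ := exists_rat_lt η
      exact ⟨p, iconvto_le_mem hI h hp⟩
    · intro p q hpq
      rcases le_or_gt η (((p:ℝ) + q)/2) with hm | hm
      · right
        refine iconvto_ge_mem hI h ?_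
        have : (p:ℝ) < q := by exact_mod_cast hpq
        linarith
      · left
        refine iconvto_le_mem hI h ?_
        have : (p:ℝ) < q := by exact_mod_cast hpq
        linarith
  · rintro ⟨⟨q0, hq0⟩, ⟨p0, hp0⟩, hdich⟩
    set D : Set ℝ := {t | ∃ q : ℚ, t = (q:ℝ) ∧ {n | (q:ℝ) < y n} ∈ I} with hD
    have hDne : D.Nonempty := ⟨q0, q0, rfl, hq0⟩
    have hDbdd : BddBelow D := by
      refine ⟨p0, ?_⟩
      rintro t ⟨q, rfl, hq⟩
      by_contra hlt
      push_neg at hlt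
      apply hI.univ_not_mem
      have : {n | (q:ℝ) < y n} ∪ {n | y n ≤ (p0:ℝ)} = Set.univ := by
        ext n; simp only [Set.mem_union, Set.mem_setOf_eq, Set.mem_univ, iff_true]
        rcases le_or_gt (y n) (q:ℝ) with h'|h'
        · right; linarith
        · left; exact h'
      rw [← this]
      exact hI.union_mem hq hp0
    refine ⟨sInf D, fun ε hε => ?_⟩
    have hupper : {n | ε < y n - sInf D} ∈ I := by
      obtain ⟨t, ⟨q, rfl, hq⟩, ht⟩ := exists_lt_of_csInf_lt hDne
        (show sInf D < sInf D + ε by linarith)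
      refine hI.mem_of_subset ?_ hq
      intro n hn
      simp only [Set.mem_setOf_eq] at hn ⊢
      linarith
    have hlower : {n | y n - sInf D < -ε} ∈ I := by
      obtain ⟨p', hp'1, hp'2⟩ := exists_rat_btwn (show sInf D - ε < sInf D by linarith)
      obtain ⟨p, hp1, hp2⟩ := exists_rat_btwn hp'1
      have hppq : p < p' := by exact_mod_cast hp2
      rcases hdich p p' hppq with h' | h'
      · refine hI.mem_of_subset ?_ h'
        intro n hn
        simp only [Set.mem_setOf_eq] at hn ⊢
        linarith
      · exfalso
        have : ((p':ℝ)) ∈ D := ⟨p', rfl, hI.mem_of_subset (lt_subset_le _ _) h'⟩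
        have := csInf_le hDbdd this
        linarith
    refine hI.mem_of_subset ?_ (hI.union_mem hupper hlower)
    intro n hn
    simp only [Set.mem_setOf_eq, Set.mem_union] at hn ⊢
    rcases lt_abs.mp hn with h' | h'
    · left; exact h'
    · right; linarith
lemma iconvto_lt_iff {I : Set (Set ℕ)} (hI : IsIdeal I) {y : ℕ → ℝ} {η : ℝ}
    (h : IConvTo I y η) (a : ℝ) :
    η < a ↔ ∃ q : ℚ, (q:ℝ) < a ∧ {n | (q:ℝ) < y n} ∈ I := by
  constructor
  · intro ha
    obtain ⟨q, hq1, hq2⟩ := exists_rat_btwn ha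
    exact ⟨q, hq2, hI.mem_of_subset (lt_subset_le _ _) (iconvto_ge_mem hI h hq1)⟩
  · rintro ⟨q, hqa, hq⟩
    by_contra hle
    push_neg at hle
    exact iconvto_lt_not_mem hI h (lt_of_lt_of_le hqa hle) hq

lemma chi_image_measurable {𝒜 : Set (Set ℕ)} (h : BorelFamily 𝒜) :
    MeasurableSet (chi '' 𝒜) := by
  have he : (MeasurableSpace.pi : MeasurableSpace (ℕ → Bool)) = borel (ℕ → Bool) :=
    BorelSpace.measurable_eq
  exact he ▸ h

/-- Key lemma: if each R · n is a measurable condition, then the set where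
{n | R a n} belongs to a Borel family is measurable. -/
lemma mem_family_measurable {α : Type*} [MeasurableSpace α] {𝒜 : Set (Set ℕ)}
    (h𝒜 : BorelFamily 𝒜) {R : α → ℕ → Prop} (hR : ∀ n, MeasurableSet {a | R a n}) :
    MeasurableSet {a | {n | R a n} ∈ 𝒜} := by
  classical
  set Φ : α → ℕ → Bool := fun a n => decide (R a n) with hΦ
  have hΦchi : ∀ a, Φ a = chi {n | R a n} := by
    intro a; funext n
    simp only [hΦ, chi]
    exact decide_eq_decide.mpr Iff.rfl
  have hΦmeas : Measurable Φ := by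
    apply measurable_pi_lambda
    intro n
    apply measurable_to_countable'
    intro b
    cases b
    · have : (fun a => Φ a n) ⁻¹' {false} = {a | R a n}ᶜ := by
        ext a; simp [hΦ]
      rw [this]; exact (hR n).compl
    · have : (fun a => Φ a n) ⁻¹' {true} = {a | R a n} := by
        ext a; simp [hΦ]
      rw [this]; exact hR n
  have : {a | {n | R a n} ∈ 𝒜} = Φ ⁻¹' (chi '' 𝒜) := by
    ext a
    simp only [Set.mem_setOf_eq, Set.mem_preimage, hΦchi a]
    constructor
    · intro h; exact ⟨_, h, rfl⟩
    · rintro ⟨S, hS, hSa⟩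
      rwa [chi_injective hSa] at hS
  rw [this]
  exact hΦmeas (chi_image_measurable h𝒜)

/-- For a Borel ideal `I`, bounded `x`, and a (Fin,I)-regular matrix `A`,
the set Σ_{x,A}(I) is Borel in Σ and the map `T` sending σ to the I-limit of Aσ(x)
is Borel measurable on Σ_{x,A}(I). -/
theorem stmt_14 (I : Set (Set ℕ)) (hI : IsIdeal I) (hIBorel : BorelFamily I)
    (x : ℕ → ℝ) (hxb : Bdd x) (A : ℕ → ℕ → ℝ) (hA : FinIRegular I A)
    (T : MonoSeq → ℝ)
    (hT : ∀ σ ∈ SigmaSet x A I, IConvTo I (matMul A (fun k => x (σ.1 k))) (T σ)) :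
    @MeasurableSet MonoSeq (borel MonoSeq) (SigmaSet x A I) ∧
      @Measurable (SigmaSet x A I) ℝ (borel (SigmaSet x A I)) (borel ℝ)
        (fun σ => T σ.1) := by
  classical
  have hBM : BorelSpace MonoSeq := Subtype.borelSpace {σ : ℕ → ℕ | StrictMono σ}
  -- measurability of partial sums
  have hPmeas : ∀ N n, Measurable fun σ : MonoSeq => ∑ k ∈ Finset.range N, A n k * x (σ.1 k) := by
    intro N n
    apply Finset.measurable_sum
    intro k _
    exact ((measurable_of_countable x).comp
      ((measurable_pi_apply k).comp measurable_subtype_coe)).const_mul _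
  -- the set where all rows converge
  set W : Set MonoSeq := {σ | RowsConv A fun k => x (σ.1 k)} with hWdef
  have hW : MeasurableSet W := by
    have hWeq : W = ⋂ n, {σ : MonoSeq |
        ∃ c, Tendsto (fun N => ∑ k ∈ Finset.range N, A n k * x (σ.1 k)) atTop (𝓝 c)} := by
      ext σ
      simp only [Set.mem_iInter, Set.mem_setOf_eq, hWdef]
      exact Iff.rfl
    rw [hWeq]
    exact MeasurableSet.iInter fun n => MeasureTheory.measurableSet_exists_tendsto fun N => hPmeas N n
  -- the transformed sequence
  set g : MonoSeq → ℕ → ℝ := fun σ n => matMul A (fun k => x (σ.1 k)) n with hgdef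
  -- measurability of g on subsets of W
  have hgW : ∀ s : Set MonoSeq, s ⊆ W → ∀ n, Measurable fun σ : s => g σ.1 n := by
    intro s hs n
    apply measurable_of_tendsto_metrizable' atTop
      (f := fun N (σ : s) => ∑ k ∈ Finset.range N, A n k * x (σ.1.1 k))
      (fun N => (hPmeas N n).comp measurable_subtype_coe)
    rw [tendsto_pi_nhds]
    intro σ
    obtain ⟨l, hl⟩ := hs σ.2 n
    have hgl : g σ.1 n = l := hl.limUnder_eq
    rw [hgl]
    exact hl
  -- the ideal-membership conditions are measurable
  have hcond : ∀ s : Set MonoSeq, s ⊆ W → ∀ B : Set ℝ, MeasurableSet B →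
      MeasurableSet {σ : s | {n | g σ.1 n ∈ B} ∈ I} := by
    intro s hs B hB
    exact mem_family_measurable hIBorel fun n => (hgW s hs n) hB
  -- description of SigmaSet as an image from W
  have hSig : SigmaSet x A I = Subtype.val '' {σ : W | IConv I fun n => g σ.1 n} := by
    ext σ
    simp only [SigmaSet, Set.mem_setOf_eq, Set.mem_image]
    constructor
    · rintro ⟨h1, h2⟩
      exact ⟨⟨σ, h1⟩, h2, rfl⟩
    · rintro ⟨⟨τ, hτ⟩, h2, rfl⟩
      exact ⟨hτ, h2⟩
  have hconv : MeasurableSet {σ : W | IConv I fun n => g σ.1 n} := by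
    have hconveq : {σ : W | IConv I fun n => g σ.1 n} =
        ((⋃ q : ℚ, {σ : W | {n | g σ.1 n ∈ Set.Ioi (q:ℝ)} ∈ I}) ∩
          ⋃ p : ℚ, {σ : W | {n | g σ.1 n ∈ Set.Iic (p:ℝ)} ∈ I}) ∩
          ⋂ p : ℚ, ⋂ q : ℚ, {σ : W | p < q →
            ({n | g σ.1 n ∈ Set.Iic (p:ℝ)} ∈ I ∨ {n | g σ.1 n ∈ Set.Ici (q:ℝ)} ∈ I)} := by
      ext σ
      simp only [Set.mem_inter_iff, Set.mem_iUnion, Set.mem_iInter, Set.mem_setOf_eq,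
        Set.mem_Ioi, Set.mem_Iic, Set.mem_Ici]
      rw [iconv_char hI]
      constructor
      · rintro ⟨h1, h2, h3⟩
        exact ⟨⟨h1, h2⟩, h3⟩
      · rintro ⟨⟨h1, h2⟩, h3⟩
        exact ⟨h1, h2, h3⟩
    rw [hconveq]
    have hsub : (W : Set MonoSeq) ⊆ W := fun _ h => h
    refine MeasurableSet.inter (MeasurableSet.inter ?_ ?_) ?_
    · exact MeasurableSet.iUnion fun q => hcond W hsub _ measurableSet_Ioi
    · exact MeasurableSet.iUnion fun p => hcond W hsub _ measurableSet_Iic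
    · refine MeasurableSet.iInter fun p => MeasurableSet.iInter fun q => ?_
      by_cases hpq : p < q
      · have : {σ : W | p < q →
            ({n | g σ.1 n ∈ Set.Iic (p:ℝ)} ∈ I ∨ {n | g σ.1 n ∈ Set.Ici (q:ℝ)} ∈ I)} =
            {σ : W | {n | g σ.1 n ∈ Set.Iic (p:ℝ)} ∈ I} ∪
            {σ : W | {n | g σ.1 n ∈ Set.Ici (q:ℝ)} ∈ I} := by
          ext σ
          simp only [Set.mem_setOf_eq, Set.mem_union]
          exact ⟨fun h => h hpq, fun h _ => h⟩
        rw [this]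
        exact (hcond W hsub _ measurableSet_Iic).union (hcond W hsub _ measurableSet_Ici)
      · have : {σ : W | p < q →
            ({n | g σ.1 n ∈ Set.Iic (p:ℝ)} ∈ I ∨ {n | g σ.1 n ∈ Set.Ici (q:ℝ)} ∈ I)} =
            Set.univ := by
          ext σ
          simp only [Set.mem_setOf_eq, Set.mem_univ, iff_true]
          exact fun h => absurd h hpq
        rw [this]
        exact MeasurableSet.univ
  have hSigMeas : MeasurableSet (SigmaSet x A I) := by
    rw [hSig]
    exact hW.subtype_image hconv
  have hSsubW : SigmaSet x A I ⊆ W := fun σ hσ => hσ.1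
  -- measurability of T
  have hTmeas : Measurable fun σ : SigmaSet x A I => T σ.1 := by
    apply measurable_of_Iio
    intro a
    have hpre : (fun σ : SigmaSet x A I => T σ.1) ⁻¹' Set.Iio a =
        ⋃ q : ℚ, ⋃ _ : (q:ℝ) < a, {σ : SigmaSet x A I | {n | g σ.1 n ∈ Set.Ioi (q:ℝ)} ∈ I} := by
      ext σ
      simp only [Set.mem_preimage, Set.mem_Iio, Set.mem_iUnion, Set.mem_setOf_eq, Set.mem_Ioi]
      rw [iconvto_lt_iff hI (hT σ.1 σ.2) a]
      constructor
      · rintro ⟨q, hq1, hq2⟩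
        exact ⟨q, hq1, hq2⟩
      · rintro ⟨q, hq1, hq2⟩
        exact ⟨q, hq1, hq2⟩
    rw [hpre]
    exact MeasurableSet.iUnion fun q => MeasurableSet.iUnion fun _ =>
      hcond (SigmaSet x A I) hSsubW _ measurableSet_Ioi
  constructor
  · have h1 : (Subtype.instMeasurableSpace : MeasurableSpace MonoSeq) = borel MonoSeq :=
      hBM.measurable_eq
    rw [← h1]
    exact hSigMeas
  · have h2 : (Subtype.instMeasurableSpace : MeasurableSpace (SigmaSet x A I)) =
        borel (SigmaSet x A I) :=
      (Subtype.borelSpace (SigmaSet x A I)).measurable_eq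
    have h3 : (Real.measurableSpace : MeasurableSpace ℝ) = borel ℝ :=
      (inferInstance : BorelSpace ℝ).measurable_eq
    rw [← h2, ← h3]
    exact hTmeas
end
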